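/- Let {I_u, J_u}_{u∈V} be a nest representation of a finite digraph D = (V,E) in which every interval has positive length, let p_v ∈ J_v be pairwise distinct points, and order V by u ≤ v iff p_u ≤ p_v. Then for all vertices u ≤ v ≤ w ≤ z, if uw ∈ E and uz ∈ E, then uv ∈ E or all of vw, vz, wz are symmetric arcs (i.e., vw, wv, vz, zv, wz, zw ∈ E). -/
import Mathlib


/-- A nest representation of a digraph `E`: closed bounded (nonempty) real intervals
`I_u = [aI u, bI u]` and `J_u = [aJ u, bJ u]` with `J_u ⊆ I_u` for every vertex `u`,
such that `u → v` is an arc iff `I_u ∩ J_v ≠ ∅`. -/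
def IsNestRepresentation {V : Type*} (E : V → V → Prop)
    (aI bI aJ bJ : V → ℝ) : Prop :=
  (∀ u, aI u ≤ bI u) ∧ (∀ u, aJ u ≤ bJ u) ∧
  (∀ u, Set.Icc (aJ u) (bJ u) ⊆ Set.Icc (aI u) (bI u)) ∧
  (∀ u v, E u v ↔ (Set.Icc (aI u) (bI u) ∩ Set.Icc (aJ v) (bJ v)).Nonempty)

/-- An interval nest digraph is one admitting a nest representation. -/
def IsIntervalNestDigraph {V : Type*} (E : V → V → Prop) : Prop :=
  ∃ aI bI aJ bJ : V → ℝ, IsNestRepresentation E aI bI aJ bJ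

/-- The arc `uv` is symmetric: both `uv` and `vu` are arcs. -/
def SymArc {V : Type*} (E : V → V → Prop) (u v : V) : Prop := E u v ∧ E v u

/-- A nest ordering of a digraph `E`: a linear order `le` on the vertices such that
for all `u ≤ v ≤ w ≤ z` (repetitions allowed) properties (i), (ii), (iii) hold. -/
def IsNestOrdering {V : Type*} (E : V → V → Prop) (le : V → V → Prop) : Prop :=
  IsLinearOrder V le ∧
  ∀ u v w z : V, le u v → le v w → le w z →
    ((E u w ∧ E u z → E u v ∨ (SymArc E v w ∧ SymArc E v z ∧ SymArc E w z)) ∧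
     (E z u ∧ E z v → E z w ∨ (SymArc E w u ∧ SymArc E v u ∧ SymArc E w v)) ∧
     (E u z ∧ E v w → E u w ∨ E v z) ∧
     (E z u ∧ E w v → E z v ∨ E w u) ∧
     (E u w ∧ E v z → E v w ∨ E u z) ∧
     (E z v ∧ E w u → E z u ∨ E w v))

/-- In a nest representation with positive-length intervals, ordering vertices by
chosen pairwise distinct points `p v ∈ J_v`: if `u ≤ v ≤ w ≤ z`, `uw ∈ E` and
`uz ∈ E`, then `uv ∈ E` or all of `vw`, `vz`, `wz` are symmetric arcs. -/
theorem nest_point_order_property_i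
    {V : Type*} [Fintype V] (E : V → V → Prop)
    (aI bI aJ bJ : V → ℝ)
    (hrep : IsNestRepresentation E aI bI aJ bJ)
    (hposI : ∀ u, aI u < bI u) (hposJ : ∀ u, aJ u < bJ u)
    (p : V → ℝ) (hp : ∀ v, p v ∈ Set.Icc (aJ v) (bJ v))
    (hinj : Function.Injective p) :
    ∀ u v w z : V, p u ≤ p v → p v ≤ p w → p w ≤ p z →
      E u w → E u z →
      E u v ∨ (SymArc E v w ∧ SymArc E v z ∧ SymArc E w z) := by
  obtain ⟨hI, hJ, hsub, hE⟩ := hrep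
  intro u v w z huv hvw hwz huw huz
  by_cases hEuv : E u v
  · exact Or.inl hEuv
  right
  -- Since ¬ E u v, intervals I_u and J_v are disjoint, and since p u ∈ I_u,
  -- p v ∈ J_v with p u ≤ p v, we get bI u < aJ v.
  have hpu : p u ∈ Set.Icc (aI u) (bI u) := hsub u (hp u)
  have hkey : bI u < aJ v := by
    by_contra h
    push_neg at h
    apply hEuv
    rw [hE]
    by_cases h2 : aJ v ≤ aI u
    · exact ⟨aI u, ⟨le_refl _, le_of_lt (hposI u)⟩, h2,
        le_trans hpu.1 (le_trans huv (hp v).2)⟩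
    · push_neg at h2
      exact ⟨aJ v, ⟨le_of_lt h2, h⟩, le_refl _, le_of_lt (hposJ v)⟩
  -- From E u w get a point x ∈ I_u ∩ J_w, so aJ w ≤ bI u < aJ v ≤ p v, and
  -- p v ≤ p w ≤ bJ w, hence p v ∈ J_w. Similarly p v ∈ J_z.
  have hpvJv : p v ∈ Set.Icc (aJ v) (bJ v) := hp v
  have hpvJw : p v ∈ Set.Icc (aJ w) (bJ w) := by
    obtain ⟨x, hxI, hxJ⟩ := (hE u w).mp huw
    exact ⟨le_trans hxJ.1 (le_trans hxI.2 (le_trans hkey.le hpvJv.1)),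
      le_trans hvw (hp w).2⟩
  have hpvJz : p v ∈ Set.Icc (aJ z) (bJ z) := by
    obtain ⟨x, hxI, hxJ⟩ := (hE u z).mp huz
    exact ⟨le_trans hxJ.1 (le_trans hxI.2 (le_trans hkey.le hpvJv.1)),
      le_trans hvw (le_trans hwz (hp z).2)⟩
  have memI : ∀ a, p v ∈ Set.Icc (aJ a) (bJ a) → p v ∈ Set.Icc (aI a) (bI a) :=
    fun a h => hsub a h
  refine ⟨⟨?_, ?_⟩, ⟨?_, ?_⟩, ?_, ?_⟩ <;> rw [hE] <;>
    exact ⟨p v, by first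
      | exact ⟨memI v hpvJv, hpvJw⟩
      | exact ⟨memI w hpvJw, hpvJv⟩
      | exact ⟨memI v hpvJv, hpvJz⟩
      | exact ⟨memI z hpvJz, hpvJv⟩
      | exact ⟨memI w hpvJw, hpvJz⟩
      | exact ⟨memI z hpvJz, hpvJw⟩⟩
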